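/- For every k ∈ ℕ and every formal power series f over a commutative ring R, the identity (δ_k ⊙ f)′ · x^k = ( (δ_k ⊙ f) · x^k )′ · S_k holds, where the prime denotes the binomial modulo 2 transform and S_k is the k-th Sierpiński polynomial. -/

import Mathlib

private lemma and_div2 (a b : ℕ) : (a &&& b) / 2 = (a / 2) &&& (b / 2) := by
  apply Nat.eq_of_testBit_eq
  intro i
  simp [Nat.testBit_div_two, Nat.testBit_and]

private lemma xor_div2 (a b : ℕ) : (a ^^^ b) / 2 = (a / 2) ^^^ (b / 2) := by
  apply Nat.eq_of_testBit_eq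
  intro i
  simp [Nat.testBit_div_two, Nat.testBit_xor]

private lemma add_eq_xor_aux : ∀ a b : ℕ, a &&& b = 0 → a + b = a ^^^ b := by
  intro a
  induction a using Nat.strong_induction_on with
  | _ a ih =>
    intro b h
    rcases Nat.eq_zero_or_pos a with rfl | ha
    · simp
    have hd : a / 2 + b / 2 = (a / 2) ^^^ (b / 2) := by
      apply ih _ (Nat.div_lt_self ha one_lt_two)
      rw [← and_div2, h]
    have hx2 : (a ^^^ b) % 2 = (a + b) % 2 := Nat.xor_mod_two_eq
    have hm : a % 2 = 0 ∨ b % 2 = 0 := by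
      have ht := congrArg (fun x => x.testBit 0) h
      simp only [Nat.testBit_and, Nat.zero_testBit, Bool.and_eq_false_iff] at ht
      rcases ht with ht | ht <;> [left; right] <;>
        simpa [Nat.testBit_zero] using ht
    have e1 := Nat.div_add_mod a 2
    have e2 := Nat.div_add_mod b 2
    have e3 := Nat.div_add_mod (a ^^^ b) 2
    rw [xor_div2] at e3
    have h1 := Nat.mod_two_eq_zero_or_one a
    have h2 := Nat.mod_two_eq_zero_or_one b
    omega

private lemma sub_eq_xor_of_submask {s m : ℕ} (h : s &&& m = s) : m - s = m ^^^ s := by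
  have h0 : (m ^^^ s) &&& s = 0 := by
    rw [Nat.and_xor_distrib_right]
    rw [Nat.and_comm s m] at h
    rw [h, Nat.and_self, Nat.xor_self]
  have : (m ^^^ s) + s = m := by
    rw [add_eq_xor_aux _ _ h0, Nat.xor_assoc, Nat.xor_self, Nat.xor_zero]
  omega

private lemma xor_pow_right_inj {c x y : ℕ} (h : x ^^^ c = y ^^^ c) : x = y := by
  have := congrArg (· ^^^ c) h
  simpa [Nat.xor_assoc] using this

private lemma sier_coeff_aux (R : Type*) [CommRing R] :
    ∀ (N k : ℕ), k < 2 ^ N → ∀ s : ℕ,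
      Polynomial.coeff
        (∏ j ∈ Finset.range N,
          if k.testBit j then 1 + Polynomial.X ^ (2 ^ j) else (1 : Polynomial R)) s
        = if s &&& k = s then 1 else 0 := by
  intro N
  induction N with
  | zero =>
    intro k hk s
    interval_cases k
    simp only [Finset.range_zero, Finset.prod_empty, Polynomial.coeff_one, Nat.and_zero]
    exact if_congr eq_comm rfl rfl
  | succ N ih =>
    intro k hk s
    have hk'lt : k % 2 ^ N < 2 ^ N := Nat.mod_lt _ (Nat.pow_pos (by norm_num))
    set k' := k % 2 ^ N with hk'def
    have hprod : (∏ j ∈ Finset.range N,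
          if k.testBit j then 1 + Polynomial.X ^ (2 ^ j) else (1 : Polynomial R))
        = ∏ j ∈ Finset.range N,
          if k'.testBit j then 1 + Polynomial.X ^ (2 ^ j) else (1 : Polynomial R) := by
      apply Finset.prod_congr rfl
      intro j hj
      rw [Finset.mem_range] at hj
      rw [hk'def, Nat.testBit_mod_two_pow, decide_eq_true hj, Bool.true_and]
    have hdm := Nat.div_add_mod k (2 ^ N)
    have hlt2 : k / 2 ^ N < 2 := by
      have h2 : (2:ℕ) ^ (N+1) = 2 ^ N * 2 := by ring
      rw [h2] at hk
      exact Nat.div_lt_of_lt_mul (by omega)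
    have htb : k.testBit N = decide (k / 2 ^ N % 2 = 1) := Nat.testBit_eq_decide_div_mod_eq ..
    rw [Finset.prod_range_succ, hprod]
    by_cases hbit : k.testBit N
    · rw [hbit] at htb
      rw [if_pos hbit]
      have hdiv : k / 2 ^ N = 1 := by
        have h9 := of_decide_eq_true htb.symm
        generalize k / 2 ^ N = q at hlt2 h9 ⊢
        omega
      rw [hdiv, mul_one] at hdm
      have hkk : k = k' + 2 ^ N := by omega
      have hk'and : k' &&& 2 ^ N = 0 := by
        rw [Nat.and_two_pow, Nat.testBit_lt_two_pow hk'lt]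
        simp
      have hkxor : k = k' ^^^ 2 ^ N := by
        rw [hkk]
        exact add_eq_xor_aux _ _ hk'and
      rw [mul_add, mul_one, Polynomial.coeff_add, Polynomial.coeff_mul_X_pow',
        ih k' hk'lt s, ih k' hk'lt (s - 2 ^ N)]
      rcases lt_or_ge s (2 ^ N) with hs | hs
      · rw [if_neg (show ¬ 2 ^ N ≤ s by omega), add_zero]
        have hsand : s &&& 2 ^ N = 0 := by
          rw [Nat.and_two_pow, Nat.testBit_lt_two_pow hs]; simp
        have heq : s &&& k = s &&& k' := by
          rw [hkxor, Nat.and_xor_distrib_left, hsand, Nat.xor_zero]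
        rw [heq]
      · have hfirst : ¬ (s &&& k' = s) := by
          have h1 : s &&& k' ≤ k' := Nat.and_le_right
          omega
        rw [if_neg hfirst, if_pos hs, zero_add]
        rcases lt_or_ge s (2 ^ (N+1)) with hs2 | hs2
        · have h2 : (2:ℕ) ^ (N+1) = 2 ^ N * 2 := by ring
          have htlt : s - 2 ^ N < 2 ^ N := by omega
          have htand : (s - 2 ^ N) &&& 2 ^ N = 0 := by
            rw [Nat.and_two_pow, Nat.testBit_lt_two_pow htlt]; simp
          have hsxor : s = (s - 2 ^ N) ^^^ 2 ^ N := by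
            have h8 := add_eq_xor_aux _ _ htand
            omega
          have hexp : s &&& k = ((s - 2 ^ N) &&& k') ^^^ 2 ^ N := by
            conv_lhs => rw [hsxor, hkxor]
            rw [Nat.and_xor_distrib_right, Nat.and_xor_distrib_left,
              Nat.and_xor_distrib_left, htand, Nat.and_comm (2^N) k', hk'and,
              Nat.and_self]
            simp [Nat.xor_assoc]
          by_cases hcond : (s - 2 ^ N) &&& k' = s - 2 ^ N
          · rw [if_pos hcond, if_pos (by rw [hexp, hcond, ← hsxor])]
          · rw [if_neg hcond, if_neg ?_]
            intro hc
            rw [hexp] at hc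
            conv_rhs at hc => rw [hsxor]
            exact hcond (xor_pow_right_inj hc)
        · have h1 : ¬ ((s - 2 ^ N) &&& k' = s - 2 ^ N) := by
            have h2 : (2:ℕ) ^ (N+1) = 2 ^ N * 2 := by ring
            have h3 : (s - 2 ^ N) &&& k' ≤ k' := Nat.and_le_right
            omega
          have h4 : ¬ (s &&& k = s) := by
            have h5 : s &&& k ≤ k := Nat.and_le_right
            omega
          rw [if_neg h1, if_neg h4]
    · rw [if_neg hbit, mul_one]
      have hdiv : k / 2 ^ N = 0 := by
        by_contra hne
        have h1 : k / 2 ^ N = 1 := by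
          generalize k / 2 ^ N = q at hlt2 hne ⊢
          omega
        rw [h1] at htb
        norm_num at htb
        exact hbit htb
      rw [hdiv, mul_zero] at hdm
      have hke : k' = k := by omega
      rw [hke]
      exact ih k (by omega) s

private lemma and_and_self_right (m k : ℕ) : (m &&& k) &&& m = m &&& k := by
  rw [Nat.and_assoc, Nat.and_comm k m, ← Nat.and_assoc, Nat.and_self]

private lemma and_and_self (m k : ℕ) : (m &&& k) &&& k = m &&& k := by
  rw [Nat.and_assoc, Nat.and_self]




/-- The Sierpiński polynomial `S m = ∏_{j≥0} (1 + X^(2^j))^(d_j m)` where `d_j m` is the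
`j`-th binary digit of `m`. -/
noncomputable def Sier (R : Type*) [CommRing R] (m : ℕ) : Polynomial R :=
  ∏ j ∈ Finset.range (m + 1), if m.testBit j then 1 + Polynomial.X ^ (2 ^ j) else 1

/-- `δ k`: the power series whose `m`-th coefficient is `1` if `m AND k = 0`, else `0`. -/
noncomputable def delta (R : Type*) [CommRing R] (k : ℕ) : PowerSeries R :=
  PowerSeries.mk fun m => if m &&& k = 0 then 1 else 0

/-- Termwise (Hadamard) product of power series. -/
noncomputable def hadS {R : Type*} [CommRing R] (f g : PowerSeries R) : PowerSeries R :=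
  PowerSeries.mk fun n => PowerSeries.coeff n f * PowerSeries.coeff n g

/-- The binomial modulo 2 transform: `f'[n] = Σ_{0≤k≤n, (n-k) AND k = 0} f[k]`. -/
noncomputable def bmt {R : Type*} [CommRing R] (f : PowerSeries R) : PowerSeries R :=
  PowerSeries.mk fun n => ∑ k ∈ Finset.range (n + 1),
    if (n - k) &&& k = 0 then PowerSeries.coeff k f else 0

private lemma sier_coeff (R : Type*) [CommRing R] (k s : ℕ) :
    Polynomial.coeff (Sier R k) s = if s &&& k = s then 1 else 0 := by
  apply sier_coeff_aux R (k+1) k _ s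
  calc k < 2 ^ k := Nat.lt_two_pow_self
    _ ≤ 2 ^ (k+1) := Nat.pow_le_pow_right (by norm_num) (by omega)


/-- For every k and power series f,
(δ k ⊙ f)' * x^k = ((δ k ⊙ f) * x^k)' * S k. -/
theorem bmt_delta_had_shift (R : Type*) [CommRing R] (k : ℕ) (f : PowerSeries R) :
    bmt (hadS (delta R k) f) * PowerSeries.X ^ k =
      bmt (hadS (delta R k) f * PowerSeries.X ^ k) * (Sier R k : PowerSeries R) := by
  ext n
  set G := hadS (delta R k) f with hGdef
  have hG : ∀ m, PowerSeries.coeff m G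
      = if m &&& k = 0 then PowerSeries.coeff m f else 0 := by
    intro m
    simp only [hGdef, hadS, delta, PowerSeries.coeff_mk, ite_mul, one_mul, zero_mul]
  -- the canonical middle form
  have key :
      (if k ≤ n then ∑ j ∈ Finset.range (n - k + 1),
          (if (n - k - j) &&& j = 0 then PowerSeries.coeff j G else 0) else 0)
      = ∑ j ∈ Finset.range (n + 1),
          if j + k ≤ n ∧ (n - (j + k)) &&& j = 0 ∧ j &&& k = 0
            then PowerSeries.coeff j f else 0 := by
    by_cases hkn : k ≤ n
    · rw [if_pos hkn]
      rw [← Finset.sum_subset (Finset.range_subset_range.2 (by omega) :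
            Finset.range (n - k + 1) ⊆ Finset.range (n + 1)) ?van]
      case van =>
        intro j hj hjn
        rw [Finset.mem_range] at hj hjn
        exact if_neg (by omega)
      apply Finset.sum_congr rfl
      intro j hj
      rw [Finset.mem_range] at hj
      have e1 : n - (j + k) = n - k - j := by omega
      have e2 : j + k ≤ n := by omega
      rw [hG j, e1]
      by_cases hA : (n - k - j) &&& j = 0 <;> by_cases hB : j &&& k = 0 <;>
        simp [hA, hB, e2]
    · rw [if_neg hkn]
      symm
      apply Finset.sum_eq_zero
      intro j hj
      exact if_neg (by omega)
  -- LHS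
  rw [PowerSeries.coeff_mul_X_pow']
  have hL : (if k ≤ n then PowerSeries.coeff (n - k) (bmt G) else 0)
      = if k ≤ n then ∑ j ∈ Finset.range (n - k + 1),
          (if (n - k - j) &&& j = 0 then PowerSeries.coeff j G else 0) else 0 := by
    by_cases hkn : k ≤ n
    · rw [if_pos hkn, if_pos hkn, bmt, PowerSeries.coeff_mk]
    · rw [if_neg hkn, if_neg hkn]
  rw [hL, key]
  -- RHS
  rw [PowerSeries.coeff_mul, Finset.Nat.sum_antidiagonal_eq_sum_range_succ_mk]
  have hR : ∀ a ∈ Finset.range (n + 1),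
      PowerSeries.coeff a (bmt (G * PowerSeries.X ^ k))
        * PowerSeries.coeff (n - a) (Sier R k : PowerSeries R)
      = ∑ t ∈ Finset.range (n + 1),
          if t ≤ a ∧ (a - t) &&& t = 0 ∧ k ≤ t ∧ (t - k) &&& k = 0 ∧
              (n - a) &&& k = n - a
            then PowerSeries.coeff (t - k) f else 0 := by
    intro a ha
    rw [Finset.mem_range] at ha
    rw [bmt, PowerSeries.coeff_mk, Polynomial.coeff_coe, sier_coeff, Finset.sum_mul]
    rw [← Finset.sum_subset (Finset.range_subset_range.2 (by omega) :
          Finset.range (a + 1) ⊆ Finset.range (n + 1)) ?van2]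
    case van2 =>
      intro t ht htn
      rw [Finset.mem_range] at ht htn
      exact if_neg (by omega)
    apply Finset.sum_congr rfl
    intro t ht
    rw [Finset.mem_range] at ht
    have ht' : t ≤ a := by omega
    rw [PowerSeries.coeff_mul_X_pow', hG]
    by_cases hA : (a - t) &&& t = 0 <;> by_cases hK : k ≤ t <;>
      by_cases hB : (t - k) &&& k = 0 <;> by_cases hD : (n - a) &&& k = n - a <;>
      simp [hA, hK, hB, hD, ht']
  rw [Finset.sum_congr rfl hR]
  -- bring both sides to sums over filtered sets and biject
  rw [← Finset.sum_product']
  rw [← Finset.sum_filter, ← Finset.sum_filter]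
  symm
  refine Finset.sum_nbij' (fun p : ℕ × ℕ => p.2 - k)
    (fun j : ℕ => (n - ((n - (j + k)) &&& k), j + k)) ?_ ?_ ?_ ?_ ?_
  · -- hi : maps filtered pairs into filtered range
    intro p hp
    rw [Finset.mem_filter, Finset.mem_product, Finset.mem_range, Finset.mem_range] at hp
    obtain ⟨⟨ha, ht⟩, hta, hut, hkt, hjk, hsk⟩ := hp
    rw [Finset.mem_filter, Finset.mem_range]
    obtain ⟨a, t⟩ := p
    dsimp only at *
    set j := t - k with hjdef
    have htj : t = j + k := by omega
    have htx : t = j ^^^ k := by rw [htj]; exact add_eq_xor_aux j k hjk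
    have hktand : k &&& t = k := by
      rw [htx, Nat.and_xor_distrib_left, Nat.and_comm k j, hjk, Nat.and_self, Nat.zero_xor]
    have hjtand : j &&& t = j := by
      rw [htx, Nat.and_xor_distrib_left, Nat.and_self, hjk, Nat.xor_zero]
    set u := a - t with hudef
    set s := n - a with hsdef
    have huk : u &&& k = 0 := by
      rw [← hktand, Nat.and_comm k t, ← Nat.and_assoc, hut, Nat.zero_and]
    have huj : u &&& j = 0 := by
      rw [← hjtand, Nat.and_comm j t, ← Nat.and_assoc, hut, Nat.zero_and]
    have hsj : s &&& j = 0 := by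
      rw [← hsk, Nat.and_assoc, Nat.and_comm k j, hjk, Nat.and_zero]
    have hus : u &&& s = 0 := by
      rw [← hsk, Nat.and_comm s k, ← Nat.and_assoc, huk, Nat.zero_and]
    have hnt : n - t = u ^^^ s := by
      rw [show n - t = u + s by omega]
      exact add_eq_xor_aux u s hus
    refine ⟨by omega, by omega, ?_, hjk⟩
    rw [show n - (j + k) = n - t by omega, hnt, Nat.and_xor_distrib_right, huj, hsj,
      Nat.xor_self]
  · -- hj : maps filtered range into filtered pairs
    intro j hj
    rw [Finset.mem_filter, Finset.mem_range] at hj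
    obtain ⟨hjn, hjkn, hmj, hjk⟩ := hj
    rw [Finset.mem_filter, Finset.mem_product, Finset.mem_range, Finset.mem_range]
    dsimp only
    set m := n - (j + k) with hmdef
    set s := m &&& k with hsdef
    have hsm : s ≤ m := Nat.and_le_left
    have hsubm : s &&& m = s := and_and_self_right m k
    have hsubk : s &&& k = s := and_and_self m k
    clear_value s m
    have hmsub : m - s = m ^^^ s := sub_eq_xor_of_submask hsubm
    have htx : j + k = j ^^^ k := add_eq_xor_aux j k hjk
    have hsj' : s &&& j = 0 := by
      rw [hsdef, Nat.and_assoc, Nat.and_comm k j, hjk, Nat.and_zero]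
    have hcore : (m ^^^ s) &&& (j ^^^ k) = 0 := by
      rw [Nat.and_xor_distrib_left, Nat.and_xor_distrib_right, Nat.and_xor_distrib_right,
        hmj, hsj', ← hsdef, hsubk]
      simp
    refine ⟨⟨by omega, by omega⟩, by omega, ?_, by omega,
      by rw [show j + k - k = j by omega]; exact hjk, ?_⟩
    · rw [show n - s - (j + k) = m - s by omega, hmsub, htx]
      exact hcore
    · rw [show n - (n - s) = s by omega]
      exact hsubk
  · -- left inverse
    intro p hp
    rw [Finset.mem_filter, Finset.mem_product, Finset.mem_range, Finset.mem_range] at hp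
    obtain ⟨⟨ha, ht⟩, hta, hut, hkt, hjk, hsk⟩ := hp
    obtain ⟨a, t⟩ := p
    dsimp only at *
    have htj : t - k + k = t := by omega
    rw [htj]
    -- need : (n - ((n - t) &&& k), t) = (a, t)
    have htx : t = (t - k) ^^^ k := by
      have h9 := add_eq_xor_aux (t - k) k hjk
      omega
    have hktand : k &&& t = k := by
      rw [htx, Nat.and_xor_distrib_left, Nat.and_comm k (t-k), hjk, Nat.and_self,
        Nat.zero_xor]
    have huk : (a - t) &&& k = 0 := by
      rw [← hktand, Nat.and_comm k t, ← Nat.and_assoc, hut, Nat.zero_and]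
    have hus : (a - t) &&& (n - a) = 0 := by
      rw [← hsk, Nat.and_comm (n-a) k, ← Nat.and_assoc, huk, Nat.zero_and]
    have hnt : n - t = (a - t) ^^^ (n - a) := by
      rw [show n - t = (a - t) + (n - a) by omega]
      exact add_eq_xor_aux _ _ hus
    have hfin : (n - t) &&& k = n - a := by
      rw [hnt, Nat.and_xor_distrib_right, huk, hsk, Nat.zero_xor]
    rw [hfin]
    have : n - (n - a) = a := by omega
    rw [this]
  · -- right inverse
    intro j hj
    rw [Finset.mem_filter, Finset.mem_range] at hj
    dsimp only
    omega

  · -- values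
    intro p hp
    rfl
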